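/- Let $W$ be a complex inner product space with inner product $\langle \cdot, \cdot \rangle$ (linear in the first variable), and let $E = W \to_{\!0} \mathbb{C}$ be the free complex vector space on $W$ with basis vectors $\epsilon_\xi$. Define the sesquilinear form $\langle\!\langle \cdot, \cdot \rangle\!\rangle : E \times E \to \mathbb{C}$ by $\langle\!\langle \phi, \psi \rangle\!\rangle = \sum_{\xi, \eta \in W} \phi(\xi)\, \overline{\psi(\eta)}\, e^{2\langle \xi, \eta \rangle}$ (a finite sum), i.e. the form determined by $\langle\!\langle \epsilon_\xi, \epsilon_\eta \rangle\!\rangle = e^{2\langle \xi, \eta \rangle}$. For $a \in W$ let $\rho(a,a) : E \to E$ be the linear map $\rho(a,a)\,\epsilon_\xi = \exp(-\langle a,a\rangle - 2\langle \xi, a\rangle)\,\epsilon_{\xi+a}$. Then $\rho(a,a)$ is isometric for this form: $\langle\!\langle \rho(a,a)\phi,\ \rho(a,a)\psi \rangle\!\rangle = \langle\!\langle \phi, \psi \rangle\!\rangle$ for all $\phi, \psi \in E$ and all $a \in W$. -/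

import Mathlib

/-- The Hermitian form on the free complex vector space `E = W →₀ ℂ` on a complex
inner product space `W`, determined on basis vectors by
`⟨⟨ε_ξ, ε_η⟩⟩ = exp(2⟨ξ,η⟩)`; on general elements it is the finite sum
`⟨⟨φ, ψ⟩⟩ = ∑_{ξ,η} φ(ξ) conj(ψ(η)) exp(2⟨ξ,η⟩)`. -/
noncomputable def hermForm {W : Type*} [NormedAddCommGroup W] [InnerProductSpace ℂ W]
    (φ ψ : W →₀ ℂ) : ℂ :=
  φ.sum fun ξ c => ψ.sum fun η d =>
    c * (starRingEnd ℂ) d * Complex.exp (2 * (inner ℂ ξ η : ℂ))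

/-- The operator `ρ(a,a)` on `E = W →₀ ℂ`, the `ℂ`-linear map determined by
`ρ(a,a) ε_ξ = exp(-⟨a,a⟩ - 2⟨ξ,a⟩) ε_{ξ+a}` on the basis vectors. -/
noncomputable def rhoDiag {W : Type*} [NormedAddCommGroup W] [InnerProductSpace ℂ W]
    (a : W) : (W →₀ ℂ) →ₗ[ℂ] (W →₀ ℂ) :=
  Finsupp.lsum ℂ fun ξ : W =>
    Complex.exp (-(inner ℂ a a : ℂ) - 2 * (inner ℂ ξ a : ℂ)) • Finsupp.lsingle (ξ + a)

section Aux
variable {W : Type*} [NormedAddCommGroup W] [InnerProductSpace ℂ W]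

lemma hermForm_single_single (ξ η : W) (c d : ℂ) :
    hermForm (Finsupp.single ξ c) (Finsupp.single η d)
      = c * (starRingEnd ℂ) d * Complex.exp (2 * (inner ℂ ξ η : ℂ)) := by
  unfold hermForm
  rw [Finsupp.sum_single_index, Finsupp.sum_single_index]
  · simp
  · simp [Finsupp.sum_single_index]

lemma hermForm_zero_left (ψ : W →₀ ℂ) : hermForm 0 ψ = 0 := by
  simp [hermForm]

lemma hermForm_zero_right (φ : W →₀ ℂ) : hermForm φ 0 = 0 := by
  simp [hermForm]

lemma hermForm_add_left (φ₁ φ₂ ψ : W →₀ ℂ) :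
    hermForm (φ₁ + φ₂) ψ = hermForm φ₁ ψ + hermForm φ₂ ψ := by
  unfold hermForm
  classical
  rw [Finsupp.sum_add_index] <;> intros <;> simp [add_mul]

lemma hermForm_add_right (φ ψ₁ ψ₂ : W →₀ ℂ) :
    hermForm φ (ψ₁ + ψ₂) = hermForm φ ψ₁ + hermForm φ ψ₂ := by
  unfold hermForm
  rw [← Finsupp.sum_add]
  congr 1; ext ξ c
  classical
  rw [Finsupp.sum_add_index] <;> intros <;> simp [map_add] <;> ring

lemma rhoDiag_single (a ξ : W) (c : ℂ) :
    rhoDiag a (Finsupp.single ξ c)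
      = Finsupp.single (ξ + a) (Complex.exp (-(inner ℂ a a : ℂ) - 2 * (inner ℂ ξ a : ℂ)) * c) := by
  simp [rhoDiag, Finsupp.lsum, Finsupp.sum_single_index, Finsupp.smul_single, mul_comm]

end Aux

/-- Subsection 3.1 of the paper: the operators `ρ(a,a)` (the action of the real
elements `a + ā` of the Heisenberg group) are isometric for the Hermitian form
`⟨⟨·,·⟩⟩` determined by `⟨⟨ε_ξ, ε_η⟩⟩ = exp(2⟨ξ,η⟩)`:
`⟨⟨ρ(a,a)φ, ρ(a,a)ψ⟩⟩ = ⟨⟨φ, ψ⟩⟩` for all `φ, ψ ∈ E` and all `a ∈ W`. -/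
theorem rhoDiag_isometric {W : Type*} [NormedAddCommGroup W] [InnerProductSpace ℂ W]
    (a : W) (φ ψ : W →₀ ℂ) :
    hermForm (rhoDiag a φ) (rhoDiag a ψ) = hermForm φ ψ := by
  induction φ using Finsupp.induction_linear with
  | zero => simp [hermForm_zero_left]
  | add f g hf hg => rw [map_add, hermForm_add_left, hermForm_add_left, hf, hg]
  | single ξ c =>
    induction ψ using Finsupp.induction_linear with
    | zero => simp [hermForm_zero_right]
    | add f g hf hg => rw [map_add, hermForm_add_right, hermForm_add_right, hf, hg]
    | single η d =>
      rw [rhoDiag_single, rhoDiag_single, hermForm_single_single, hermForm_single_single]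
      have h : (-(inner ℂ a a : ℂ) - 2 * (inner ℂ ξ a : ℂ))
            + (starRingEnd ℂ) (-(inner ℂ a a : ℂ) - 2 * (inner ℂ η a : ℂ))
            + 2 * (inner ℂ (ξ + a) (η + a) : ℂ) = 2 * (inner ℂ ξ η : ℂ) := by
        simp only [map_sub, map_neg, map_mul, inner_conj_symm, inner_add_left,
          inner_add_right, Complex.conj_ofNat]
        ring
      rw [map_mul, ← Complex.exp_conj]
      calc Complex.exp (-(inner ℂ a a : ℂ) - 2 * (inner ℂ ξ a : ℂ)) * c *
            (Complex.exp ((starRingEnd ℂ) (-(inner ℂ a a : ℂ) - 2 * (inner ℂ η a : ℂ))) * (starRingEnd ℂ) d) *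
            Complex.exp (2 * (inner ℂ (ξ + a) (η + a) : ℂ))
          = c * (starRingEnd ℂ) d *
            Complex.exp ((-(inner ℂ a a : ℂ) - 2 * (inner ℂ ξ a : ℂ))
              + (starRingEnd ℂ) (-(inner ℂ a a : ℂ) - 2 * (inner ℂ η a : ℂ))
              + 2 * (inner ℂ (ξ + a) (η + a) : ℂ)) := by
            rw [Complex.exp_add, Complex.exp_add]; ring
        _ = c * (starRingEnd ℂ) d * Complex.exp (2 * (inner ℂ ξ η : ℂ)) := by rw [h]
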